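/- Let G be a strongly connected finite directed graph without loops with sink s. Starting from a rotor configuration T_0 ∈ Rec(G) with a chip at x_0, let T_k and x_k be the rotor configuration and chip location after k rotor-router steps. If T_k ∈ Rec(G), then x_k ∉ {x_0, …, x_{k−1}}; that is, whenever the intermediate rotor configuration is an oriented spanning tree, the chip is at a vertex it has never visited before. -/
import Mathlib


/-- A finite directed multigraph without loops, together with a distinguished
sink vertex and, for each vertex `x`, a cyclic ordering of the edges emanating
from `x`: the outgoing edges at `x` are indexed by `ZMod (deg x)` (in cyclic
order), and `head x e` is the target of the edge `e`. -/
structure RotorGraph (V : Type*) [Fintype V] [DecidableEq V] where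
  sink : V
  deg : V → ℕ
  deg_pos : ∀ x, 0 < deg x
  head : ∀ x : V, ZMod (deg x) → V
  no_loops : ∀ x e, head x e ≠ x

namespace RotorGraph

variable {V : Type*} [Fintype V] [DecidableEq V] (G : RotorGraph V)

/-- `x` is adjacent to `y` if some edge goes from `x` to `y`. -/
def Adj (x y : V) : Prop := ∃ e, G.head x e = y

/-- `G` is strongly connected: every vertex has a directed path to every vertex. -/
def StronglyConnected : Prop := ∀ x y : V, Relation.ReflTransGen G.Adj x y

/-- A rotor configuration: each vertex carries a rotor pointing along one of
its outgoing edges.  (The value at the sink is irrelevant: it is never read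
nor modified by the rotor-router walk.) -/
abbrev Conf := ∀ x : V, ZMod (G.deg x)

/-- One step of rotor-router walk for the state (rotor configuration, chip
location): if the chip is not at the sink, first increment the rotor at the
chip's location to the next edge in the cyclic ordering, then move the chip
along this new edge.  States whose chip is at the sink are absorbing. -/
def step (p : G.Conf × V) : G.Conf × V :=
  if p.2 = G.sink then p
  else (Function.update p.1 p.2 (p.1 p.2 + 1), G.head p.2 (p.1 p.2 + 1))

/-- The target of the rotor at `x`. -/
def next (T : G.Conf) (x : V) : V := G.head x (T x)

/-- The rotors of `T` contain an oriented cycle all of whose vertices lie in `A`. -/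
def HasCycleIn (T : G.Conf) (A : Set V) : Prop :=
  ∃ (m : ℕ) (x : V), 0 < m ∧ (∀ i < m, (G.next T)^[i] x ∈ A) ∧ (G.next T)^[m] x = x

/-- `T ∈ Rec(G)`: the rotors at the non-sink vertices form no oriented cycle,
i.e. they form an oriented spanning tree rooted at the sink. -/
def Rec (T : G.Conf) : Prop := ¬ G.HasCycleIn T {y | y ≠ G.sink}

/-- `e_x(T)`: start a chip at `x` and let it perform rotor-router walk until
it first reaches the sink; `chip x T` is the resulting rotor configuration. -/
noncomputable def chip (x : V) (T : G.Conf) : G.Conf :=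
  haveI := Classical.dec (∃ n, (G.step^[n] (T, x)).2 = G.sink)
  if h : ∃ n, (G.step^[n] (T, x)).2 = G.sink then (G.step^[Nat.find h] (T, x)).1 else T

end RotorGraph

/-- Lemma 2(ii): starting from `T₀ ∈ Rec(G)` with a chip at `x₀`, suppose the
chip performs `k` genuine rotor-router steps (it does not reach the sink
before time `k`).  If the configuration `T_k` after `k` steps is in `Rec(G)`,
then the chip location `x_k` is a vertex the chip has never visited before:
`x_k ∉ {x₀, …, x_{k-1}}`. -/
theorem stmt2 {V : Type*} [Fintype V] [DecidableEq V] (G : RotorGraph V)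
    (hG : G.StronglyConnected) (T0 : G.Conf) (x0 : V) (hT0 : G.Rec T0) (k : ℕ)
    (hrun : ∀ i < k, (G.step^[i] (T0, x0)).2 ≠ G.sink)
    (h : G.Rec (G.step^[k] (T0, x0)).1) :
    ∀ i < k, (G.step^[i] (T0, x0)).2 ≠ (G.step^[k] (T0, x0)).2 := by

  classical
  let P : ℕ → G.Conf × V := fun i => G.step^[i] (T0, x0)
  have hPs : ∀ i, P (i+1) = G.step (P i) := by
    intro i
    show G.step^[i+1] (T0, x0) = _
    rw [Function.iterate_succ_apply']
  have hstep : ∀ i, i < k →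
      P (i+1) = (Function.update (P i).1 (P i).2 ((P i).1 (P i).2 + 1),
        G.head (P i).2 ((P i).1 (P i).2 + 1)) := by
    intro i hi
    rw [hPs i, RotorGraph.step, if_neg (hrun i hi)]
  -- rotor stability after the last visit
  have hstab : ∀ j, j < k → (∀ i, j < i → i < k → (P i).2 ≠ (P j).2) →
      ∀ m, j + 1 ≤ m → m ≤ k → (P m).1 (P j).2 = (P (j+1)).1 (P j).2 := by
    intro j hjk hlastj m hm hmk
    induction m, hm using Nat.le_induction with
    | base => rfl
    | succ m hm ih =>
      have hmk' : m < k := lt_of_lt_of_le (Nat.lt_succ_self m) hmk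
      have hne : (P j).2 ≠ (P m).2 := by
        rcases Nat.lt_or_ge j m with hlt | hge
        · exact fun e => hlastj m hlt hmk' e.symm
        · have : j = m := le_antisymm (Nat.le_of_succ_le hm) hge
          exact absurd this (by omega)
      rw [hstep m hmk']
      simp only [Function.update_of_ne hne]
      exact ih (le_of_lt hmk)
  have hnext : ∀ j, j < k → (∀ i, j < i → i < k → (P i).2 ≠ (P j).2) →
      G.next (P k).1 (P j).2 = (P (j+1)).2 := by
    intro j hjk hlastj
    have h1 : (P k).1 (P j).2 = (P (j+1)).1 (P j).2 :=
      hstab j hjk hlastj k hjk le_rfl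
    have h2 : (P (j+1)).1 (P j).2 = (P j).1 (P j).2 + 1 := by
      rw [hstep j hjk]; exact Function.update_self _ _ _
    have h3 : (P (j+1)).2 = G.head (P j).2 ((P j).1 (P j).2 + 1) := by
      rw [hstep j hjk]
    rw [RotorGraph.next, h1, h2, h3]
  -- last visit
  have hlast : ∀ v : V, (∃ j, j < k ∧ (P j).2 = v) →
      ∃ j, j < k ∧ (P j).2 = v ∧ ∀ i, j < i → i < k → (P i).2 ≠ v := by
    rintro v ⟨j0, hj0, hx0⟩
    let s : Finset ℕ := (Finset.range k).filter fun j => (P j).2 = v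
    have hs : s.Nonempty := ⟨j0, by simp [s, hj0, hx0]⟩
    have hmem := s.max'_mem hs
    simp only [s, Finset.mem_filter, Finset.mem_range] at hmem
    refine ⟨s.max' hs, hmem.1, hmem.2, fun i hji hik hxi => ?_⟩
    have : i ∈ s := by simp [s, hik, hxi]
    exact absurd (Finset.le_max' s i this) (not_le.mpr hji)
  -- main argument
  by_contra hcon
  push_neg at hcon
  obtain ⟨i0, hi0k, hi0⟩ := hcon
  have hi0' : (P i0).2 = (P k).2 := hi0
  set f := G.next (P k).1 with hf
  have key : ∀ v, (∃ i, i ≤ k ∧ (P i).2 = v) → ∃ i, i ≤ k ∧ (P i).2 = f v := by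
    rintro v ⟨i, hik, hiv⟩
    have hv' : ∃ j, j < k ∧ (P j).2 = v := by
      rcases lt_or_eq_of_le hik with h' | h'
      · exact ⟨i, h', hiv⟩
      · refine ⟨i0, hi0k, ?_⟩
        rw [hi0']; rw [h'] at hiv; exact hiv
    obtain ⟨j, hjk, hjv, hjlast⟩ := hlast v hv'
    refine ⟨j + 1, hjk, ?_⟩
    have hh := hnext j hjk (fun i a b => hjv ▸ hjlast i a b)
    rw [hjv] at hh
    exact hh.symm
  have hiter : ∀ n, ∃ i, i ≤ k ∧ (P i).2 = f^[n] (P 0).2 := by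
    intro n
    induction n with
    | zero => exact ⟨0, Nat.zero_le k, rfl⟩
    | succ n ih =>
      rw [Function.iterate_succ_apply']
      exact key _ ih
  have hne : ∀ n, f^[n] (P 0).2 ≠ G.sink := by
    intro n
    obtain ⟨i, hik, hiv⟩ := hiter n
    rw [← hiv]
    rcases lt_or_eq_of_le hik with h' | h'
    · exact hrun i h'
    · rw [h', ← hi0']; exact hrun i0 hi0k
  have main : ∀ a b : ℕ, a < b → f^[a] (P 0).2 = f^[b] (P 0).2 → False := by
    intro a b hab heq
    refine h ⟨b - a, f^[a] (P 0).2, Nat.sub_pos_of_lt hab, fun i _ => ?_, ?_⟩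
    · show f^[i] (f^[a] (P 0).2) ≠ G.sink
      rw [← Function.iterate_add_apply]
      exact hne (i + a)
    · show f^[b - a] (f^[a] (P 0).2) = f^[a] (P 0).2
      rw [← Function.iterate_add_apply, Nat.sub_add_cancel hab.le]
      exact heq.symm
  obtain ⟨a, b, hab, heq⟩ :=
    Finite.exists_ne_map_eq_of_infinite (fun n => f^[n] (P 0).2)
  rcases hab.lt_or_gt with h' | h'
  · exact main a b h' heq
  · exact main b a h' heq.symm
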